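/- Burnside's theorem on matrix algebras: a unital subalgebra 𝔸 of the algebra of d×d complex matrices is irreducible (the only subspaces of ℂ^d invariant under all elements of 𝔸 are {0} and ℂ^d) if and only if 𝔸 equals the full matrix algebra M_d(ℂ). -/

import Mathlib

open Submodule LinearMap Module Matrix

lemma exists_mulVec_eq {d : ℕ} {v : Fin d → ℂ} (hv : v ≠ 0) (u : Fin d → ℂ) :
    ∃ M : Matrix (Fin d) (Fin d) ℂ, M.mulVec v = u := by
  obtain ⟨j, hj⟩ := Function.ne_iff.mp hv
  rw [Pi.zero_apply] at hj
  refine ⟨fun i k => if k = j then u i * (v j)⁻¹ else 0, ?_⟩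
  funext i
  simp only [Matrix.mulVec, dotProduct, ite_mul, zero_mul]
  rw [Finset.sum_ite_eq' Finset.univ j fun k => u i * (v j)⁻¹ * v k]
  simp only [Finset.mem_univ, if_true]
  field_simp

lemma burnside_transitive {d : ℕ} (A : Subalgebra ℂ (Matrix (Fin d) (Fin d) ℂ))
    (hirr : ∀ W : Submodule ℂ (Fin d → ℂ),
        (∀ M ∈ A, ∀ v ∈ W, M.mulVec v ∈ W) → W = ⊥ ∨ W = ⊤)
    {v : Fin d → ℂ} (hv : v ≠ 0) (u : Fin d → ℂ) :
    ∃ S ∈ A, S.mulVec v = u := by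
  let W : Submodule ℂ (Fin d → ℂ) :=
    { carrier := {u | ∃ S ∈ A, S.mulVec v = u}
      add_mem' := by
        rintro a b ⟨S, hS, rfl⟩ ⟨T, hT, rfl⟩
        exact ⟨S + T, A.add_mem hS hT, Matrix.add_mulVec S T v⟩
      zero_mem' := ⟨0, A.zero_mem, Matrix.zero_mulVec v⟩
      smul_mem' := by
        rintro c a ⟨S, hS, rfl⟩
        exact ⟨c • S, A.smul_mem hS c, Matrix.smul_mulVec c S v⟩ }
  have hWinv : ∀ M ∈ A, ∀ x ∈ W, M.mulVec x ∈ W := by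
    rintro M hM x ⟨S, hS, rfl⟩
    exact ⟨M * S, A.mul_mem hM hS, (Matrix.mulVec_mulVec v M S).symm⟩
  have hvW : v ∈ W := ⟨1, A.one_mem, Matrix.one_mulVec v⟩
  rcases hirr W hWinv with h | h
  · rw [h] at hvW; exact absurd hvW (by simpa using hv)
  · have : u ∈ W := h ▸ mem_top
    exact this

lemma mulVecLin_inj {d : ℕ} {T : Matrix (Fin d) (Fin d) ℂ} (h : T.mulVecLin = 0) : T = 0 := by
  have : Matrix.toLin' T = Matrix.toLin' 0 := by
    rw [Matrix.toLin'_apply', Matrix.toLin'_apply', h, Matrix.mulVecLin_zero]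
  exact Matrix.toLin'.injective this

lemma exists_rank_one {d : ℕ} (hd : 1 ≤ d) (A : Subalgebra ℂ (Matrix (Fin d) (Fin d) ℂ))
    (htrans : ∀ v : Fin d → ℂ, v ≠ 0 → ∀ u, ∃ S ∈ A, S.mulVec v = u) :
    ∃ T, T ∈ A ∧ T ≠ 0 ∧ finrank ℂ (LinearMap.range T.mulVecLin) = 1 := by
  classical
  have hone : (1 : Matrix (Fin d) (Fin d) ℂ) ≠ 0 := by
    intro h
    have := congrFun (congrFun h ⟨0, hd⟩) ⟨0, hd⟩
    simp [Matrix.one_apply] at this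
  set P : ℕ → Prop := fun n => ∃ T, T ∈ A ∧ T ≠ 0 ∧
    finrank ℂ (LinearMap.range T.mulVecLin) = n with hP
  have hex : ∃ n, P n := ⟨_, 1, A.one_mem, hone, rfl⟩
  obtain ⟨T, hTA, hT0, hTr⟩ := Nat.find_spec hex
  set r := Nat.find hex with hrdef
  -- r ≥ 1
  have hr1 : 1 ≤ r := by
    rcases Nat.eq_zero_or_pos r with h | h
    · exfalso
      rw [h] at hTr
      have : LinearMap.range T.mulVecLin = ⊥ := Submodule.finrank_eq_zero.mp hTr
      exact hT0 (mulVecLin_inj (LinearMap.range_eq_bot.mp this))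
    · exact h
  -- r = 1
  have hr : r = 1 := by
    by_contra hne
    have hr2 : 2 ≤ r := by omega
    -- pick u with T.mulVec u ≠ 0
    have hTlin : T.mulVecLin ≠ 0 := fun h => hT0 (mulVecLin_inj h)
    obtain ⟨u, hu⟩ : ∃ u, T.mulVecLin u ≠ 0 := by
      by_contra h
      push_neg at h
      exact hTlin (LinearMap.ext fun x => h x)
    set p := LinearMap.range T.mulVecLin with hpdef
    have hTu_mem : T.mulVec u ∈ p := ⟨u, rfl⟩
    have hTu_ne : T.mulVec u ≠ 0 := hu
    -- range not contained in span of T u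
    have hnotle : ¬ p ≤ span ℂ {T.mulVec u} := by
      intro hle
      have h1 : finrank ℂ p ≤ finrank ℂ (span ℂ {T.mulVec u}) :=
        Submodule.finrank_mono hle
      rw [finrank_span_singleton hTu_ne, hTr] at h1
      omega
    obtain ⟨y, hyp, hyns⟩ := SetLike.not_le_iff_exists.mp hnotle
    obtain ⟨v', rfl⟩ := hyp
    -- S maps Tu to v'
    obtain ⟨S, hSA, hSv⟩ := htrans (T.mulVec u) hTu_ne v'
    -- restrict (T*S) to p
    have hstab : ∀ x ∈ p, (T * S).mulVecLin x ∈ p := by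
      intro x _
      rw [Matrix.mulVecLin_mul]
      exact ⟨S.mulVecLin x, rfl⟩
    set g : Module.End ℂ p := ((T * S).mulVecLin).restrict hstab with hg
    have : Nontrivial p := Submodule.nontrivial_iff_ne_bot.mpr
      (fun h => hTu_ne (by simpa [h] using hTu_mem))
    obtain ⟨μ, hμ⟩ := Module.End.exists_eigenvalue g
    obtain ⟨z, hz⟩ := hμ.exists_hasEigenvector
    have hz0 : (z : Fin d → ℂ) ≠ 0 := fun h => hz.right (Subtype.ext h)
    have hzeq : (T * S).mulVecLin (z : Fin d → ℂ) = μ • (z : Fin d → ℂ) := by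
      have := hz.apply_eq_smul
      have := congrArg (Subtype.val) this
      simpa [hg, LinearMap.restrict_apply] using this
    -- the smaller-rank element
    set B := T * S * T - μ • T with hB
    have hBA : B ∈ A := A.sub_mem (A.mul_mem (A.mul_mem hTA hSA) hTA) (A.smul_mem hTA μ)
    set h : (Fin d → ℂ) →ₗ[ℂ] (Fin d → ℂ) := (T * S).mulVecLin - μ • LinearMap.id with hh
    have hcomp : B.mulVecLin = h ∘ₗ T.mulVecLin := by
      apply LinearMap.ext
      intro x
      simp only [hB, hh, Matrix.mulVecLin_apply, LinearMap.comp_apply, LinearMap.sub_apply,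
        LinearMap.smul_apply, LinearMap.id_apply, Matrix.sub_mulVec,
        Matrix.smul_mulVec, Matrix.mulVec_mulVec]
    -- B ≠ 0
    have hBu : B.mulVec u = T.mulVec v' - μ • T.mulVec u := by
      simp only [hB, Matrix.sub_mulVec, Matrix.smul_mulVec]
      rw [← Matrix.mulVec_mulVec, ← Matrix.mulVec_mulVec, hSv]
    have hB0 : B ≠ 0 := by
      intro h0
      rw [h0, Matrix.zero_mulVec] at hBu
      apply hyns
      have : T.mulVec v' = μ • T.mulVec u := by
        have := hBu.symm
        rwa [sub_eq_zero] at this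
      rw [show T.mulVecLin v' = T.mulVec v' from rfl, this]
      exact Submodule.smul_mem _ _ (Submodule.mem_span_singleton_self _)
    -- rank of B is < r
    set g' : p →ₗ[ℂ] (Fin d → ℂ) := h.domRestrict p with hg'
    have hzker : z ∈ LinearMap.ker g' := by
      simp only [hg', LinearMap.mem_ker, LinearMap.domRestrict_apply, hh,
        LinearMap.sub_apply, LinearMap.smul_apply, LinearMap.id_apply, hzeq, sub_self]
    have hkerpos : 0 < finrank ℂ (LinearMap.ker g') := by
      refine Nat.pos_of_ne_zero fun h0 => hz.right ?_
      have hk := Submodule.finrank_eq_zero.mp h0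
      rw [hk] at hzker
      exact (Submodule.mem_bot ℂ).mp hzker
    have hrn : finrank ℂ (LinearMap.range g') + finrank ℂ (LinearMap.ker g') = r := by
      rw [LinearMap.finrank_range_add_finrank_ker g']
      exact hTr
    have hrange : LinearMap.range B.mulVecLin = LinearMap.range g' := by
      rw [hcomp, LinearMap.range_comp, hg', LinearMap.range_domRestrict]
    have hlt : finrank ℂ (LinearMap.range B.mulVecLin) < r := by
      rw [hrange]; omega
    exact absurd (⟨B, hBA, hB0, rfl⟩ : P (finrank ℂ (LinearMap.range B.mulVecLin)))
      (Nat.find_min hex hlt)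

  exact ⟨T, hTA, hT0, by rw [hTr, hr]⟩

lemma burnside_units {d : ℕ} (A : Subalgebra ℂ (Matrix (Fin d) (Fin d) ℂ))
    (hirr : ∀ W : Submodule ℂ (Fin d → ℂ), (∀ M ∈ A, ∀ v ∈ W, M.mulVec v ∈ W) → W = ⊥ ∨ W = ⊤)
    (htrans : ∀ v : Fin d → ℂ, v ≠ 0 → ∀ u, ∃ S ∈ A, S.mulVec v = u)
    (T : Matrix (Fin d) (Fin d) ℂ) (hTA : T ∈ A) (hT0 : T ≠ 0)
    (hTr1 : finrank ℂ (LinearMap.range T.mulVecLin) = 1) :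
    ∀ i j : Fin d, Matrix.single i j (1:ℂ) ∈ A := by
  classical
  obtain ⟨u₀, hu₀⟩ : ∃ u, T.mulVecLin u ≠ 0 := by
    by_contra h
    push_neg at h
    exact hT0 (by
      have : T.mulVecLin = 0 := LinearMap.ext fun x => h x
      have h2 : Matrix.toLin' T = Matrix.toLin' 0 := by
        rw [Matrix.toLin'_apply', Matrix.toLin'_apply', this, Matrix.mulVecLin_zero]
      exact Matrix.toLin'.injective h2)
  set w : Fin d → ℂ := T.mulVec u₀ with hwdef
  have hw : w ≠ 0 := hu₀
  have hle : span ℂ {w} ≤ LinearMap.range T.mulVecLin := by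
    rw [span_le, Set.singleton_subset_iff]
    exact ⟨u₀, rfl⟩
  have hrange : span ℂ {w} = LinearMap.range T.mulVecLin :=
    Submodule.eq_of_le_of_finrank_eq hle (by rw [finrank_span_singleton hw, hTr1])
  have hmem : ∀ x, T.mulVecLin x ∈ span ℂ {w} := fun x => hrange ▸ LinearMap.mem_range_self _ x
  set e := LinearEquiv.toSpanNonzeroSingleton ℂ (Fin d → ℂ) w hw with he
  set f : (Fin d → ℂ) →ₗ[ℂ] ℂ :=
    e.symm.toLinearMap ∘ₗ (T.mulVecLin.codRestrict (span ℂ {w}) hmem) with hf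
  have hfx : ∀ x, T.mulVec x = f x • w := by
    intro x
    have h1 : e (f x) = T.mulVecLin.codRestrict (span ℂ {w}) hmem x := by
      simp [hf]
    have h2 := congrArg Subtype.val h1
    rw [LinearEquiv.toSpanNonzeroSingleton_apply] at h2
    simpa using h2.symm
  have hfu₀ : f u₀ = 1 := by
    have h1 : w = f u₀ • w := hfx u₀
    have h2 : (f u₀ - 1) • w = 0 := by
      rw [sub_smul, one_smul, ← h1, sub_self]
    rcases smul_eq_zero.mp h2 with h | h
    · exact sub_eq_zero.mp h
    · exact absurd h hw
  -- the dual orbit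
  set U : Submodule ℂ (Module.Dual ℂ (Fin d → ℂ)) :=
    { carrier := {g | ∃ R ∈ A, g = f ∘ₗ R.mulVecLin}
      add_mem' := by
        rintro a b ⟨R1, hR1, rfl⟩ ⟨R2, hR2, rfl⟩
        refine ⟨R1 + R2, A.add_mem hR1 hR2, ?_⟩
        apply LinearMap.ext
        intro x
        simp [Matrix.add_mulVec, Matrix.mulVecLin_apply]
      zero_mem' := by
        refine ⟨0, A.zero_mem, ?_⟩
        apply LinearMap.ext
        intro x
        simp [Matrix.mulVecLin_apply]
      smul_mem' := by
        rintro c a ⟨R, hR, rfl⟩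
        refine ⟨c • R, A.smul_mem hR c, ?_⟩
        apply LinearMap.ext
        intro x
        simp [Matrix.mulVecLin_apply, Matrix.smul_mulVec] } with hU
  have hWinv : ∀ M ∈ A, ∀ x ∈ U.dualCoannihilator, M.mulVec x ∈ U.dualCoannihilator := by
    intro M hM x hx
    rw [Submodule.mem_dualCoannihilator] at hx ⊢
    rintro φ ⟨R, hR, rfl⟩
    have h1 : (f ∘ₗ R.mulVecLin) (M.mulVec x) = (f ∘ₗ (R * M).mulVecLin) x := by
      simp [Matrix.mulVecLin_apply, Matrix.mulVec_mulVec]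
    rw [h1]
    exact hx _ ⟨R * M, A.mul_mem hR hM, rfl⟩
  have hWbot : U.dualCoannihilator = ⊥ := by
    rcases hirr _ hWinv with h | h
    · exact h
    · exfalso
      have hu₀W : u₀ ∈ U.dualCoannihilator := h ▸ Submodule.mem_top
      rw [Submodule.mem_dualCoannihilator] at hu₀W
      have := hu₀W (f ∘ₗ (1 : Matrix (Fin d) (Fin d) ℂ).mulVecLin)
        ⟨1, A.one_mem, rfl⟩
      rw [LinearMap.comp_apply, Matrix.mulVecLin_apply, Matrix.one_mulVec, hfu₀] at this
      exact one_ne_zero this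
  have hUtop : U = ⊤ := by
    apply Submodule.eq_top_of_finrank_eq
    have h1 := Subspace.finrank_add_finrank_dualCoannihilator_eq U
    rw [hWbot, finrank_bot] at h1
    rw [Subspace.dual_finrank_eq]
    omega
  -- build matrix units
  intro i j
  obtain ⟨S, hSA, hSw⟩ := htrans w hw (Pi.single i 1)
  have hproj : (LinearMap.proj j : (Fin d → ℂ) →ₗ[ℂ] ℂ) ∈ U := hUtop ▸ Submodule.mem_top
  obtain ⟨R, hRA, hRf⟩ := hproj
  have hE : S * T * R = Matrix.single i j (1:ℂ) := by
    have hlin : (S * T * R).mulVecLin = (Matrix.single i j (1:ℂ)).mulVecLin := by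
      apply LinearMap.ext
      intro x
      have h1 : (S * T * R).mulVec x = S.mulVec (T.mulVec (R.mulVec x)) := by
        rw [Matrix.mulVec_mulVec, Matrix.mulVec_mulVec]
      have h2 : f (R.mulVec x) = x j := by
        have := congrFun (congrArg (DFunLike.coe) hRf) x
        simpa [Matrix.mulVecLin_apply] using this.symm
      rw [Matrix.mulVecLin_apply, Matrix.mulVecLin_apply, h1, hfx (R.mulVec x), h2,
        Matrix.mulVec_smul, hSw, Matrix.single_mulVec]
      funext k
      rcases eq_or_ne k i with rfl | hk
      · simp
      · simp [Function.update, hk, Pi.single_eq_of_ne hk]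
    have : Matrix.toLin' (S * T * R) = Matrix.toLin' (Matrix.single i j (1:ℂ)) := by
      rw [Matrix.toLin'_apply', Matrix.toLin'_apply', hlin]
    exact Matrix.toLin'.injective this
  exact hE ▸ A.mul_mem (A.mul_mem hSA hTA) hRA

/-- Burnside's theorem on matrix algebras: a unital subalgebra of `d × d` complex matrices is
irreducible (no nontrivial invariant subspace of `ℂ^d`) iff it is the full matrix algebra. -/
theorem burnside_matrix_algebra (d : ℕ) (hd : 1 ≤ d)
    (A : Subalgebra ℂ (Matrix (Fin d) (Fin d) ℂ)) :
    (∀ W : Submodule ℂ (Fin d → ℂ),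
        (∀ M ∈ A, ∀ v ∈ W, M.mulVec v ∈ W) → W = ⊥ ∨ W = ⊤) ↔ A = ⊤ := by
  constructor
  · intro hirr
    have htrans : ∀ v : Fin d → ℂ, v ≠ 0 → ∀ u, ∃ S ∈ A, S.mulVec v = u :=
      fun v hv u => burnside_transitive A hirr hv u
    obtain ⟨T, hTA, hT0, hTr1⟩ := exists_rank_one hd A htrans
    have hunits := burnside_units A hirr htrans T hTA hT0 hTr1
    rw [eq_top_iff]
    intro M _
    rw [Matrix.matrix_eq_sum_single M]
    refine A.toSubmodule.sum_mem fun i _ => A.toSubmodule.sum_mem fun j _ => ?_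
    have : Matrix.single i j (M i j) = (M i j) • Matrix.single i j (1:ℂ) := by
      rw [Matrix.smul_single, smul_eq_mul, mul_one]
    rw [this]
    exact A.smul_mem (hunits i j) (M i j)
  · intro hA W hW
    by_cases hbot : W = ⊥
    · exact Or.inl hbot
    · right
      obtain ⟨v, hvW, hv⟩ := Submodule.exists_mem_ne_zero_of_ne_bot hbot
      rw [eq_top_iff]
      intro u _
      obtain ⟨M, hM⟩ := exists_mulVec_eq hv u
      have : M ∈ A := by rw [hA]; trivial
      exact hM ▸ hW M this v hvW
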